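/- Let W be a finite-dimensional inner product space and ∂ : W_n → W_{n+1}, ∂* : W_{n+1} → W_n linear maps on a sequence of finite-dimensional inner product spaces with ∂∘∂ = 0, ∂*∘∂* = 0, and ∂, ∂* adjoint to each other. Set □ = ∂∂* + ∂*∂. Then each W_n decomposes orthogonally as W_n = im(∂*) ⊕ ker(□) ⊕ im(∂), and moreover ker(∂*) = im(∂*) ⊕ ker(□) and ker(∂) = im(∂) ⊕ ker(□). Consequently ker(∂)/im(∂) ≅ ker(□). -/

import Mathlib

set_option maxHeartbeats 1000000 in
/-- **algebraic Hodge decomposition.** Let `(Wₙ)` be finite-dimensional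
inner product spaces with adjoint differentials `∂ : Wₙ → W_{n+1}`,
`∂* : W_{n+1} → Wₙ` satisfying `∂∘∂ = 0`, `∂*∘∂* = 0`.  With `□ = ∂∂* + ∂*∂`, every
`Wₙ` decomposes orthogonally as `im(∂*) ⊕ ker(□) ⊕ im(∂)`; moreover
`ker(∂*) = im(∂*) ⊕ ker(□)`, `ker(∂) = im(∂) ⊕ ker(□)`, and consequently
`ker(∂)/im(∂) ≅ ker(□)`. -/
theorem stmt11 {𝕜 : Type*} [RCLike 𝕜] (W : ℤ → Type*)
    [∀ n, NormedAddCommGroup (W n)] [∀ n, InnerProductSpace 𝕜 (W n)]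
    [∀ n, FiniteDimensional 𝕜 (W n)]
    (d : ∀ n : ℤ, W n →ₗ[𝕜] W (n + 1)) (dstar : ∀ n : ℤ, W (n + 1) →ₗ[𝕜] W n)
    (hdd : ∀ (n : ℤ) (x : W n), d (n + 1) (d n x) = 0)
    (hss : ∀ (n : ℤ) (x : W (n + 1 + 1)), dstar n (dstar (n + 1) x) = 0)
    (hadj : ∀ (n : ℤ) (x : W n) (y : W (n + 1)),
      @inner 𝕜 _ _ (d n x) y = @inner 𝕜 _ _ x (dstar n y)) :
    ∀ n : ℤ, ∀ box : W (n + 1) →ₗ[𝕜] W (n + 1),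
      box = (d n) ∘ₗ (dstar n) + (dstar (n + 1)) ∘ₗ (d (n + 1)) →
      (LinearMap.range (dstar (n + 1)) ⊔ LinearMap.ker box ⊔ LinearMap.range (d n) = ⊤) ∧
      (∀ x ∈ LinearMap.range (dstar (n + 1)), ∀ y ∈ LinearMap.ker box,
        @inner 𝕜 _ _ x y = (0 : 𝕜)) ∧
      (∀ x ∈ LinearMap.range (dstar (n + 1)), ∀ y ∈ LinearMap.range (d n),
        @inner 𝕜 _ _ x y = (0 : 𝕜)) ∧
      (∀ x ∈ LinearMap.ker box, ∀ y ∈ LinearMap.range (d n),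
        @inner 𝕜 _ _ x y = (0 : 𝕜)) ∧
      (LinearMap.ker (dstar n) = LinearMap.range (dstar (n + 1)) ⊔ LinearMap.ker box) ∧
      (LinearMap.ker (d (n + 1)) = LinearMap.range (d n) ⊔ LinearMap.ker box) ∧
      Nonempty ((↥(LinearMap.ker (d (n + 1))) ⧸
          (Submodule.comap (LinearMap.ker (d (n + 1))).subtype (LinearMap.range (d n))))
        ≃ₗ[𝕜] ↥(LinearMap.ker box)) := by
  intro n box hbox
  -- adjoint identity in the other order
  have hadj' : ∀ (m : ℤ) (x : W m) (y : W (m + 1)),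
      @inner 𝕜 _ _ (dstar m y) x = @inner 𝕜 _ _ y (d m x) := by
    intro m x y
    rw [← inner_conj_symm, ← hadj, inner_conj_symm]
  have hboxapp : ∀ x : W (n + 1),
      box x = d n (dstar n x) + dstar (n + 1) (d (n + 1) x) := by
    intro x; rw [hbox]; rfl
  -- ⟪box x, x⟫ = ⟪∂*x, ∂*x⟫ + ⟪∂x, ∂x⟫
  have hquad : ∀ x : W (n + 1), @inner 𝕜 _ _ (box x) x
      = @inner 𝕜 _ _ (dstar n x) (dstar n x) + @inner 𝕜 _ _ (d (n + 1) x) (d (n + 1) x) := by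
    intro x
    rw [hboxapp, inner_add_left, hadj n (dstar n x) x, hadj' (n + 1) x (d (n + 1) x)]
  -- kernel of box = ker d ∩ ker dstar
  have hker : ∀ x : W (n + 1), box x = 0 ↔ (d (n + 1) x = 0 ∧ dstar n x = 0) := by
    intro x
    constructor
    · intro hx
      have h0 : (0 : 𝕜) = @inner 𝕜 _ _ (dstar n x) (dstar n x)
          + @inner 𝕜 _ _ (d (n + 1) x) (d (n + 1) x) := by
        rw [← hquad, hx, inner_zero_left]
      have h0' := congrArg RCLike.re h0
      rw [map_add, inner_self_eq_norm_sq, inner_self_eq_norm_sq] at h0'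
      simp only [map_zero] at h0'
      have h1 : ‖dstar n x‖ ^ 2 = 0 ∧ ‖d (n + 1) x‖ ^ 2 = 0 := by
        constructor <;> nlinarith [sq_nonneg ‖dstar n x‖, sq_nonneg ‖d (n + 1) x‖]
      constructor
      · exact norm_eq_zero.mp (by nlinarith [h1.2, norm_nonneg (d (n + 1) x)])
      · exact norm_eq_zero.mp (by nlinarith [h1.1, norm_nonneg (dstar n x)])
    · intro ⟨h1, h2⟩
      rw [hboxapp, h1, h2, map_zero, map_zero, add_zero]
  -- orthogonality statements
  have o1 : ∀ x ∈ LinearMap.range (dstar (n + 1)), ∀ y ∈ LinearMap.ker box,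
      @inner 𝕜 _ _ x y = (0 : 𝕜) := by
    rintro _ ⟨z, rfl⟩ y hy
    rw [hadj', ((hker y).mp hy).1, inner_zero_right]
  have o2 : ∀ x ∈ LinearMap.range (dstar (n + 1)), ∀ y ∈ LinearMap.range (d n),
      @inner 𝕜 _ _ x y = (0 : 𝕜) := by
    rintro _ ⟨z, rfl⟩ _ ⟨w, rfl⟩
    rw [hadj', hdd, inner_zero_right]
  have o3 : ∀ x ∈ LinearMap.ker box, ∀ y ∈ LinearMap.range (d n),
      @inner 𝕜 _ _ x y = (0 : 𝕜) := by
    rintro x hx _ ⟨w, rfl⟩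
    rw [← inner_conj_symm, hadj, ((hker x).mp hx).2, inner_zero_right, map_zero]
  -- box is self-adjoint
  have hsa : ∀ x y : W (n + 1), @inner 𝕜 _ _ (box x) y = @inner 𝕜 _ _ x (box y) := by
    intro x y
    rw [hboxapp, hboxapp, inner_add_left, inner_add_right, hadj n (dstar n x) y,
      hadj' (n + 1) y (d (n + 1) x), ← hadj (n + 1) x (d (n + 1) y),
      ← hadj' n (dstar n y) x]
  -- ker box = (range box)ᗮ
  have hko : LinearMap.ker box = (LinearMap.range box)ᗮ := by
    ext x
    simp only [LinearMap.mem_ker, Submodule.mem_orthogonal]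
    constructor
    · rintro hx _ ⟨v, rfl⟩
      rw [hsa, hx, inner_zero_right]
    · intro h
      have h1 : @inner 𝕜 _ _ (box x) x = 0 := h (box x) ⟨x, rfl⟩
      rw [hquad] at h1
      have h0' := congrArg RCLike.re h1
      rw [map_add, inner_self_eq_norm_sq, inner_self_eq_norm_sq] at h0'
      simp only [map_zero] at h0'
      have hd : d (n + 1) x = 0 := norm_eq_zero.mp (by
        nlinarith [sq_nonneg ‖dstar n x‖, sq_nonneg ‖d (n + 1) x‖, norm_nonneg (d (n + 1) x)])
      have hds : dstar n x = 0 := norm_eq_zero.mp (by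
        nlinarith [sq_nonneg ‖dstar n x‖, sq_nonneg ‖d (n + 1) x‖, norm_nonneg (dstar n x)])
      rw [hboxapp, hd, hds, map_zero, map_zero, add_zero]
  -- the sum is everything
  have htop : LinearMap.range (dstar (n + 1)) ⊔ LinearMap.ker box ⊔ LinearMap.range (d n) = ⊤ := by
    rw [eq_top_iff]
    have h1 : LinearMap.range box ⊔ (LinearMap.range box)ᗮ = ⊤ :=
      Submodule.sup_orthogonal_of_hasOrthogonalProjection
    rw [← h1]
    apply sup_le
    · rintro _ ⟨v, rfl⟩
      rw [hboxapp]
      refine Submodule.add_mem _ ?_ ?_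
      · exact Submodule.mem_sup_right (LinearMap.mem_range_self _ _)
      · exact Submodule.mem_sup_left
          (Submodule.mem_sup_left (LinearMap.mem_range_self _ _))
    · rw [← hko]
      intro x hx
      exact Submodule.mem_sup_left (Submodule.mem_sup_right hx)
  -- ker dstar decomposition
  have hks : LinearMap.ker (dstar n) = LinearMap.range (dstar (n + 1)) ⊔ LinearMap.ker box := by
    apply le_antisymm
    · intro x hx
      have hx' : dstar n x = 0 := hx
      have hxmem : x ∈ LinearMap.range (dstar (n + 1)) ⊔ LinearMap.ker box ⊔
          LinearMap.range (d n) := htop ▸ Submodule.mem_top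
      rw [Submodule.mem_sup] at hxmem
      obtain ⟨ab, hab, c, hc, rfl⟩ := hxmem
      obtain ⟨w, rfl⟩ := hc
      -- show the range-d component vanishes
      have habs : dstar n ab = 0 := by
        rw [Submodule.mem_sup] at hab
        obtain ⟨a, ha, b, hb, rfl⟩ := hab
        obtain ⟨z, rfl⟩ := ha
        rw [map_add, hss, ((hker b).mp hb).2, add_zero]
      have hc0 : dstar n (d n w) = 0 := by
        rw [map_add, habs, zero_add] at hx'; exact hx'
      have : @inner 𝕜 _ _ (d n w) (d n w) = 0 := by
        rw [hadj, hc0, inner_zero_right]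
      have hw0 : d n w = 0 := inner_self_eq_zero.mp this
      rw [hw0, add_zero]
      exact hab
    · apply sup_le
      · rintro _ ⟨z, rfl⟩
        exact hss n z
      · intro x hx
        exact ((hker x).mp hx).2
  -- ker d decomposition
  have hkd : LinearMap.ker (d (n + 1)) = LinearMap.range (d n) ⊔ LinearMap.ker box := by
    apply le_antisymm
    · intro x hx
      have hx' : d (n + 1) x = 0 := hx
      have hxmem : x ∈ LinearMap.range (dstar (n + 1)) ⊔ LinearMap.ker box ⊔
          LinearMap.range (d n) := htop ▸ Submodule.mem_top
      rw [Submodule.mem_sup] at hxmem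
      obtain ⟨ab, hab, c, hc, rfl⟩ := hxmem
      rw [Submodule.mem_sup] at hab
      obtain ⟨a, ha, b, hb, rfl⟩ := hab
      obtain ⟨z, hz⟩ := ha
      have hdb : d (n + 1) b = 0 := ((hker b).mp hb).1
      have hdc : d (n + 1) c = 0 := by
        obtain ⟨w, rfl⟩ := hc
        exact hdd n w
      have hda : d (n + 1) a = 0 := by
        rw [map_add, map_add, hdb, hdc, add_zero, add_zero] at hx'; exact hx'
      have h2 : @inner 𝕜 _ _ a a = @inner 𝕜 _ _ z (d (n + 1) a) := by
        rw [← hadj' (n + 1) a z, hz]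
      rw [hda, inner_zero_right] at h2
      have ha0 : a = 0 := inner_self_eq_zero.mp h2
      rw [ha0, zero_add]
      exact Submodule.add_mem _ (Submodule.mem_sup_right hb) (Submodule.mem_sup_left hc)
    · apply sup_le
      · rintro _ ⟨w, rfl⟩
        exact hdd n w
      · intro x hx
        exact ((hker x).mp hx).1
  refine ⟨htop, o1, o2, o3, hks, hkd, ?_⟩
  -- the quotient isomorphism
  have hle : LinearMap.ker box ≤ LinearMap.ker (d (n + 1)) := fun x hx => ((hker x).mp hx).1
  set K := LinearMap.ker (d (n + 1))
  set R := Submodule.comap K.subtype (LinearMap.range (d n))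
  let f : ↥(LinearMap.ker box) →ₗ[𝕜] (↥K ⧸ R) := R.mkQ ∘ₗ Submodule.inclusion hle
  have hinj : Function.Injective f := by
    rw [← LinearMap.ker_eq_bot]
    rw [Submodule.eq_bot_iff]
    intro x hx
    have : Submodule.inclusion hle x ∈ R := by
      have := (Submodule.Quotient.mk_eq_zero R).mp hx
      exact this
    have hxr : (x : W (n + 1)) ∈ LinearMap.range (d n) := this
    have : @inner 𝕜 _ _ (x : W (n + 1)) (x : W (n + 1)) = 0 := o3 _ x.2 _ hxr
    exact Subtype.ext (inner_self_eq_zero.mp this)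
  have hsurj : Function.Surjective f := by
    intro q
    obtain ⟨y, rfl⟩ := Submodule.mkQ_surjective R q
    have hy : (y : W (n + 1)) ∈ LinearMap.range (d n) ⊔ LinearMap.ker box := hkd ▸ y.2
    rw [Submodule.mem_sup] at hy
    obtain ⟨c, hc, b, hb, hcb⟩ := hy
    refine ⟨⟨b, hb⟩, ?_⟩
    have hbk : b ∈ K := hle hb
    show R.mkQ (Submodule.inclusion hle ⟨b, hb⟩) = R.mkQ y
    rw [Submodule.mkQ_apply, Submodule.mkQ_apply, Submodule.Quotient.eq]
    have : ((Submodule.inclusion hle ⟨b, hb⟩ - y : ↥K) : W (n + 1)) = -c := by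
      simp only [Submodule.coe_sub, Submodule.inclusion_apply, ← hcb]
      abel
    show (Submodule.inclusion hle ⟨b, hb⟩ - y : ↥K) ∈ R
    show ((Submodule.inclusion hle ⟨b, hb⟩ - y : ↥K) : W (n + 1)) ∈ LinearMap.range (d n)
    rw [this]
    exact Submodule.neg_mem _ hc
  exact ⟨(LinearEquiv.ofBijective f ⟨hinj, hsurj⟩).symm⟩
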